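/- Let (V, ⟨·,·⟩) be a real inner product space, X ∈ V with ‖X‖ < 1, and F(y) = (√⟨y,y⟩ + ⟨X,y⟩)²/√⟨y,y⟩. Let Y, U be orthonormal in V and W ∈ V with ⟨W,Y⟩ = 0. Then the ratio g_Y(W,U) / (g_Y(Y,Y)g_Y(U,U) − g_Y(Y,U)²) equals ( 6⟨X,W⟩⟨X,U⟩ + ⟨W,U⟩(1−⟨X,Y⟩²) ) / ( (1+⟨X,Y⟩)⁴ (2⟨X,U⟩² − ⟨X,Y⟩² + 1) ). -/

import Mathlib

open Real RealInnerProductSpace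

noncomputable def Fab {V : Type*} [NormedAddCommGroup V] [InnerProductSpace ℝ V]
    (X : V) (y : V) : ℝ :=
  (Real.sqrt (inner ℝ y y) + (inner ℝ X y : ℝ))^2 / Real.sqrt (inner ℝ y y)

noncomputable def gfun {V : Type*} [NormedAddCommGroup V] [InnerProductSpace ℝ V]
    (F : V → ℝ) (Y U W : V) : ℝ :=
  (deriv (fun s : ℝ => deriv (fun t : ℝ => (F (Y + s • U + t • W))^2) 0) 0) / 2

lemma Fab_sq {V : Type*} [NormedAddCommGroup V] [InnerProductSpace ℝ V]
    (X y : V) :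
    (Fab X y)^2 = (Real.sqrt (inner ℝ y y) + (inner ℝ X y : ℝ))^4 / (inner ℝ y y : ℝ) := by
  by_cases h : y = 0
  · simp [Fab, h]
  · have hpos : (0:ℝ) < inner ℝ y y := by
      rw [real_inner_self_eq_norm_sq]
      exact pow_pos (norm_pos_iff.2 h) 2
    have hs : Real.sqrt (inner ℝ y y) ^ 2 = (inner ℝ y y : ℝ) := Real.sq_sqrt hpos.le
    rw [Fab, div_pow, hs]
    ring_nf

noncomputable def Dex (hs bs ps xB : ℝ) : ℝ :=
  4*(Real.sqrt hs + ps)^3*(bs/Real.sqrt hs + xB)/hs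
    - (Real.sqrt hs + ps)^4*(2*bs)/hs^2

lemma deriv_inner_fn (hs bs f ps xB : ℝ) (h : 0 < hs) :
    deriv (fun t : ℝ =>
      (Real.sqrt (hs + 2*bs*t + f*t^2) + (ps + xB*t))^4 / (hs + 2*bs*t + f*t^2)) 0
      = Dex hs bs ps xB := by
  have hh : HasDerivAt (fun t : ℝ => hs + 2*bs*t + f*t^2) (2*bs) 0 := by
    have h1 : HasDerivAt (fun t : ℝ => hs + 2*bs*t + f*t^2)
        (0 + 2*bs*1 + f*(2*0^1*1)) 0 := by
      exact ((hasDerivAt_const 0 hs).add ((hasDerivAt_id 0).const_mul (2*bs))).add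
        (((hasDerivAt_id 0).pow 2).const_mul f)
    simpa using h1
  have h0 : hs + 2*bs*(0:ℝ) + f*0^2 = hs := by ring
  have hne : hs + 2*bs*(0:ℝ) + f*0^2 ≠ 0 := by rw [h0]; exact h.ne'
  have hr : HasDerivAt (fun t : ℝ => Real.sqrt (hs + 2*bs*t + f*t^2))
      (2*bs / (2*Real.sqrt (hs + 2*bs*(0:ℝ) + f*0^2))) 0 := hh.sqrt hne
  have hp : HasDerivAt (fun t : ℝ => ps + xB*t) xB 0 := by
    simpa using ((hasDerivAt_id (0:ℝ)).const_mul xB).const_add ps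
  have hq := hr.add hp
  have hq4 := hq.pow 4
  have hdiv := hq4.div hh hne
  refine hdiv.deriv.trans ?_
  have hsne : Real.sqrt hs ≠ 0 := (Real.sqrt_pos.2 h).ne'
  rw [Dex]
  rw [h0]
  norm_num
  field_simp

lemma deriv_Dex (a b c e xA xB xY : ℝ) :
    deriv (fun s : ℝ => Dex (1+2*a*s+e*s^2) (b+c*s) (xY+xA*s) xB) 0
      = 12*(1+xY)^2*(a+xA)*(b+xB) + 4*(1+xY)^3*(c-a*b) - 8*a*(1+xY)^3*(b+xB)
        - 8*b*(1+xY)^3*(a+xA) - 2*c*(1+xY)^4 + 8*a*b*(1+xY)^4 := by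
  have hh : HasDerivAt (fun s : ℝ => 1+2*a*s+e*s^2) (2*a) 0 := by
    have h1 : HasDerivAt (fun s : ℝ => 1+2*a*s+e*s^2)
        (0 + 2*a*1 + e*(2*0^1*1)) 0 := by
      exact ((hasDerivAt_const 0 1).add ((hasDerivAt_id 0).const_mul (2*a))).add
        (((hasDerivAt_id 0).pow 2).const_mul e)
    simpa using h1
  have h0 : (1:ℝ) + 2*a*0 + e*0^2 = 1 := by ring
  have hne : (1:ℝ) + 2*a*0 + e*0^2 ≠ 0 := by rw [h0]; norm_num
  have hrval : Real.sqrt ((1:ℝ) + 2*a*0 + e*0^2) = 1 := by rw [h0, Real.sqrt_one]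
  have hrne : Real.sqrt ((1:ℝ) + 2*a*0 + e*0^2) ≠ 0 := by rw [hrval]; norm_num
  have hr : HasDerivAt (fun s : ℝ => Real.sqrt (1+2*a*s+e*s^2))
      (2*a / (2*Real.sqrt ((1:ℝ) + 2*a*0 + e*0^2))) 0 := hh.sqrt hne
  have hbs : HasDerivAt (fun s : ℝ => b + c*s) c 0 := by
    simpa using ((hasDerivAt_id (0:ℝ)).const_mul c).const_add b
  have hps : HasDerivAt (fun s : ℝ => xY + xA*s) xA 0 := by
    simpa using ((hasDerivAt_id (0:ℝ)).const_mul xA).const_add xY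
  have hq := hr.add hps
  have hT1inner := (hbs.div hr hrne).add_const xB
  have hT1 := (((hq.pow 3).const_mul 4).mul hT1inner).div hh hne
  have hT2 := ((hq.pow 4).mul (hbs.const_mul 2)).div (hh.pow 2) (pow_ne_zero 2 hne)
  have hD := hT1.sub hT2
  have hfun : (fun s : ℝ => Dex (1+2*a*s+e*s^2) (b+c*s) (xY+xA*s) xB)
      = fun s : ℝ =>
        4*(Real.sqrt (1+2*a*s+e*s^2) + (xY+xA*s))^3*((b+c*s)/Real.sqrt (1+2*a*s+e*s^2) + xB)
          / (1+2*a*s+e*s^2)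
        - (Real.sqrt (1+2*a*s+e*s^2) + (xY+xA*s))^4*(2*(b+c*s))/(1+2*a*s+e*s^2)^2 := by
    funext s; rw [Dex]
  rw [hfun]
  refine hD.deriv.trans ?_
  simp only [h0, hrval]
  norm_num
  ring

lemma gfun_eq {V : Type*} [NormedAddCommGroup V] [InnerProductSpace ℝ V]
    (X Y A B : V) (hY : (inner ℝ Y Y : ℝ) = 1) :
    gfun (Fab X) Y A B =
      (6*(1+(inner ℝ X Y:ℝ))^2*((inner ℝ Y A:ℝ)+(inner ℝ X A:ℝ))*((inner ℝ Y B:ℝ)+(inner ℝ X B:ℝ))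
        + 2*(1+(inner ℝ X Y:ℝ))^3*((inner ℝ A B:ℝ)-(inner ℝ Y A:ℝ)*(inner ℝ Y B:ℝ))
        - 4*(inner ℝ Y A:ℝ)*(1+(inner ℝ X Y:ℝ))^3*((inner ℝ Y B:ℝ)+(inner ℝ X B:ℝ))
        - 4*(inner ℝ Y B:ℝ)*(1+(inner ℝ X Y:ℝ))^3*((inner ℝ Y A:ℝ)+(inner ℝ X A:ℝ))
        - (inner ℝ A B:ℝ)*(1+(inner ℝ X Y:ℝ))^4
        + 4*(inner ℝ Y A:ℝ)*(inner ℝ Y B:ℝ)*(1+(inner ℝ X Y:ℝ))^4) := by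
  set a := (inner ℝ Y A : ℝ)
  set b := (inner ℝ Y B : ℝ)
  set c := (inner ℝ A B : ℝ)
  set e := (inner ℝ A A : ℝ)
  set f := (inner ℝ B B : ℝ)
  set xY := (inner ℝ X Y : ℝ)
  set xA := (inner ℝ X A : ℝ)
  set xB := (inner ℝ X B : ℝ)
  have hexp : ∀ s t : ℝ, (inner ℝ (Y + s • A + t • B) (Y + s • A + t • B) : ℝ)
      = (1+2*a*s+e*s^2) + 2*(b+c*s)*t + f*t^2 := by
    intro s t
    simp only [inner_add_left, inner_add_right, real_inner_smul_left, real_inner_smul_right,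
      hY, show (inner ℝ A Y : ℝ) = a from (real_inner_comm A Y).symm,
      show (inner ℝ B Y : ℝ) = b from (real_inner_comm B Y).symm,
      show (inner ℝ B A : ℝ) = c from (real_inner_comm B A).symm]
    ring
  have hP : ∀ s t : ℝ, (inner ℝ X (Y + s • A + t • B) : ℝ) = (xY + xA*s) + xB*t := by
    intro s t
    simp only [inner_add_right, real_inner_smul_right]
    ring
  have hev : ∀ᶠ s in nhds (0:ℝ),
      deriv (fun t : ℝ => (Fab X (Y + s • A + t • B))^2) 0
        = Dex (1+2*a*s+e*s^2) (b+c*s) (xY+xA*s) xB := by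
    have hc : ContinuousAt (fun s : ℝ => 1+2*a*s+e*s^2) 0 := by fun_prop
    have hgt : ∀ᶠ s in nhds (0:ℝ), 0 < 1+2*a*s+e*s^2 := by
      have := hc.eventually_mem (s := Set.Ioi (0:ℝ))
        (by rw [show (1:ℝ)+2*a*0+e*0^2 = 1 by norm_num]; exact Ioi_mem_nhds one_pos)
      simpa [Set.mem_Ioi] using this
    filter_upwards [hgt] with s hs
    have hfn : (fun t : ℝ => (Fab X (Y + s • A + t • B))^2)
        = fun t : ℝ =>
          (Real.sqrt ((1+2*a*s+e*s^2) + 2*(b+c*s)*t + f*t^2) + ((xY + xA*s) + xB*t))^4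
            / ((1+2*a*s+e*s^2) + 2*(b+c*s)*t + f*t^2) := by
      funext t
      rw [Fab_sq, hexp, hP]
    rw [hfn, deriv_inner_fn _ _ _ _ _ hs]
  rw [gfun, Filter.EventuallyEq.deriv_eq hev, deriv_Dex]
  ring

theorem stmt_5 (V : Type*) [NormedAddCommGroup V] [InnerProductSpace ℝ V]
    (X : V) (hX : ‖X‖ < 1) (Y U W : V)
    (hY : (inner ℝ Y Y : ℝ) = 1) (hU : (inner ℝ U U : ℝ) = 1) (hYU : (inner ℝ Y U : ℝ) = 0)
    (hWY : (inner ℝ W Y : ℝ) = 0) :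
    gfun (Fab X) Y W U /
        (gfun (Fab X) Y Y Y * gfun (Fab X) Y U U - (gfun (Fab X) Y Y U)^2) =
      (6 * (inner ℝ X W : ℝ) * (inner ℝ X U : ℝ) + (inner ℝ W U : ℝ) * (1 - (inner ℝ X Y : ℝ)^2)) /
        ((1 + (inner ℝ X Y : ℝ))^4 * (2 * (inner ℝ X U : ℝ)^2 - (inner ℝ X Y : ℝ)^2 + 1)) := by
  have hYW : (inner ℝ Y W : ℝ) = 0 := by rw [real_inner_comm]; exact hWY
  set xY := (inner ℝ X Y : ℝ) with hxY
  set xU := (inner ℝ X U : ℝ) with hxU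
  set xW := (inner ℝ X W : ℝ) with hxW
  set cc := (inner ℝ W U : ℝ) with hcc
  have hnY : ‖Y‖ = 1 := by
    have h := hY
    rw [real_inner_self_eq_norm_sq] at h
    nlinarith [norm_nonneg Y]
  have habs : |xY| < 1 := by
    calc |xY| ≤ ‖X‖ * ‖Y‖ := abs_real_inner_le_norm X Y
    _ = ‖X‖ := by rw [hnY, mul_one]
    _ < 1 := hX
  have hax := abs_lt.1 habs
  have hq : (1 + xY) ≠ 0 := by linarith [hax.1]
  have hx2 : xY^2 < 1 := by nlinarith [hax.1, hax.2]
  have hM : (0:ℝ) < 2*xU^2 - xY^2 + 1 := by nlinarith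
  have e1 : gfun (Fab X) Y W U = (1+xY)^2*(6*xW*xU + cc*(1-xY^2)) := by
    rw [gfun_eq X Y W U hY, hYW, hYU]; ring
  have e2 : gfun (Fab X) Y Y Y = (1+xY)^4 := by
    rw [gfun_eq X Y Y Y hY, hY]; ring
  have e3 : gfun (Fab X) Y U U = 6*(1+xY)^2*xU^2 + 2*(1+xY)^3 - (1+xY)^4 := by
    rw [gfun_eq X Y U U hY, hYU, hU]; ring
  have e4 : gfun (Fab X) Y Y U = 2*(1+xY)^3*xU := by
    rw [gfun_eq X Y Y U hY, hYU, hY]; ring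
  rw [e1, e2, e3, e4]
  have hD : (1+xY)^4 * (6*(1+xY)^2*xU^2 + 2*(1+xY)^3 - (1+xY)^4) - (2*(1+xY)^3*xU)^2 ≠ 0 := by
    have hrw : (1+xY)^4 * (6*(1+xY)^2*xU^2 + 2*(1+xY)^3 - (1+xY)^4) - (2*(1+xY)^3*xU)^2
        = (1+xY)^6 * (2*xU^2 - xY^2 + 1) := by ring
    rw [hrw]
    exact mul_ne_zero (pow_ne_zero 6 hq) hM.ne'
  have hD' : (1 + xY)^4 * (2 * xU^2 - xY^2 + 1) ≠ 0 :=
    mul_ne_zero (pow_ne_zero 4 hq) hM.ne'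
  rw [div_eq_div_iff hD hD']
  ring
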